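/- Pointwise limit of the Bailey WZ summand: With F(n,k) as in the WZ-pair for Bailey's theorem (and the same nonvanishing hypotheses), for every fixed nonnegative integer k one has lim_{n→∞} F(n,k) = δ_{k,0}, i.e. the limit is 1 if k = 0 and 0 otherwise. -/

import Mathlib

open Complex Finset Filter Topology

/-- The Pochhammer symbol `(x)_k = x (x+1) ⋯ (x+k-1)`. -/
noncomputable def poch (x : ℂ) (k : ℕ) : ℂ := (ascPochhammer ℂ k).eval x

/-- The WZ summand for Bailey's theorem:
`F(n,k) = (a)_k (1-a)_k (1/2)^k / ((b+2n)_k k!) ·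
  Γ((a+b)/2+n) Γ((1-a+b)/2+n) / (Γ(b/2+n) Γ((1+b)/2+n))`. -/
noncomputable def baileyF (a b : ℂ) (n k : ℕ) : ℂ :=
  poch a k * poch (1 - a) k * (1 / 2 : ℂ) ^ k /
    (poch (b + 2 * n) k * (Nat.factorial k : ℂ)) *
  (Gamma ((a + b) / 2 + n) * Gamma ((1 - a + b) / 2 + n) /
    (Gamma (b / 2 + n) * Gamma ((1 + b) / 2 + n)))

/-- `G(n,k) = F(n,k) · (-2k/(b+2n+k))`. -/
noncomputable def baileyG (a b : ℂ) (n k : ℕ) : ℂ :=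
  baileyF a b n k * (-2 * k / (b + 2 * n + k))

lemma poch_eq_prod (x : ℂ) : ∀ k : ℕ, poch x k = ∏ j ∈ Finset.range k, (x + j)
  | 0 => by simp [poch]
  | (k+1) => by
    rw [Finset.prod_range_succ, ← poch_eq_prod x k, poch, poch, ascPochhammer_succ_eval]

lemma Gamma_shift (z : ℂ) (hz : ∀ j : ℕ, z + (j : ℂ) ≠ 0) :
    ∀ n : ℕ, Gamma (z + n) = Gamma z * ∏ j ∈ Finset.range n, (z + j)
  | 0 => by simp
  | (n+1) => by
    have h1 : z + ((n + 1 : ℕ) : ℂ) = (z + n) + 1 := by push_cast; ring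
    rw [h1, Complex.Gamma_add_one _ (hz n), Gamma_shift z hz n, Finset.prod_range_succ]
    ring

lemma gamma_ratio_tendsto (x y u v : ℂ) (hsum : x + y = u + v)
    (hx : ∀ n : ℕ, Gamma (x + (n : ℂ)) ≠ 0) (hy : ∀ n : ℕ, Gamma (y + (n : ℂ)) ≠ 0)
    (hu : ∀ n : ℕ, Gamma (u + (n : ℂ)) ≠ 0) (hv : ∀ n : ℕ, Gamma (v + (n : ℂ)) ≠ 0) :
    Tendsto (fun n : ℕ => Gamma (x + n) * Gamma (y + n) / (Gamma (u + n) * Gamma (v + n)))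
      atTop (𝓝 1) := by
  have nz : ∀ z : ℂ, (∀ n : ℕ, Gamma (z + (n : ℂ)) ≠ 0) → ∀ j : ℕ, z + (j : ℂ) ≠ 0 := by
    intro z hz j h
    exact hz j (by rw [h, Complex.Gamma_zero])
  have hx0 := nz x hx; have hy0 := nz y hy; have hu0 := nz u hu; have hv0 := nz v hv
  have hΓx : Gamma x ≠ 0 := by simpa using hx 0
  have hΓy : Gamma y ≠ 0 := by simpa using hy 0
  have hΓu : Gamma u ≠ 0 := by simpa using hu 0
  have hΓv : Gamma v ≠ 0 := by simpa using hv 0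
  have hone : (Gamma x * Gamma y / (Gamma u * Gamma v)) *
      (Gamma u * Gamma v / (Gamma x * Gamma y)) = 1 := by
    field_simp
  rw [show (1 : ℂ) = (Gamma x * Gamma y / (Gamma u * Gamma v)) *
      (Gamma u * Gamma v / (Gamma x * Gamma y)) from hone.symm,
    ← Filter.tendsto_add_atTop_iff_nat 1]
  have hmain : Tendsto (fun n : ℕ => Gamma x * Gamma y / (Gamma u * Gamma v) *
      (GammaSeq u n * GammaSeq v n / (GammaSeq x n * GammaSeq y n))) atTop
      (𝓝 ((Gamma x * Gamma y / (Gamma u * Gamma v)) *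
        (Gamma u * Gamma v / (Gamma x * Gamma y)))) :=
    tendsto_const_nhds.mul
      (((GammaSeq_tendsto_Gamma u).mul (GammaSeq_tendsto_Gamma v)).div
        ((GammaSeq_tendsto_Gamma x).mul (GammaSeq_tendsto_Gamma y)) (mul_ne_zero hΓx hΓy))
  refine hmain.congr' ?_
  filter_upwards [eventually_ge_atTop 1] with n hn
  have hn0 : (n : ℂ) ≠ 0 := Nat.cast_ne_zero.mpr (by omega)
  have hfac : ((n.factorial : ℂ)) ≠ 0 := Nat.cast_ne_zero.mpr n.factorial_ne_zero
  set Px := ∏ j ∈ Finset.range (n + 1), (x + j) with hPxd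
  set Py := ∏ j ∈ Finset.range (n + 1), (y + j) with hPyd
  set Pu := ∏ j ∈ Finset.range (n + 1), (u + j) with hPud
  set Pv := ∏ j ∈ Finset.range (n + 1), (v + j) with hPvd
  have hPx : Px ≠ 0 := Finset.prod_ne_zero_iff.mpr fun j _ => hx0 j
  have hPy : Py ≠ 0 := Finset.prod_ne_zero_iff.mpr fun j _ => hy0 j
  have hPu : Pu ≠ 0 := Finset.prod_ne_zero_iff.mpr fun j _ => hu0 j
  have hPv : Pv ≠ 0 := Finset.prod_ne_zero_iff.mpr fun j _ => hv0 j
  have ex : GammaSeq x n * Px = (n : ℂ) ^ x * n.factorial := by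
    rw [Complex.GammaSeq]; exact div_mul_cancel₀ _ hPx
  have ey : GammaSeq y n * Py = (n : ℂ) ^ y * n.factorial := by
    rw [Complex.GammaSeq]; exact div_mul_cancel₀ _ hPy
  have eu : GammaSeq u n * Pu = (n : ℂ) ^ u * n.factorial := by
    rw [Complex.GammaSeq]; exact div_mul_cancel₀ _ hPu
  have ev : GammaSeq v n * Pv = (n : ℂ) ^ v * n.factorial := by
    rw [Complex.GammaSeq]; exact div_mul_cancel₀ _ hPv
  have hcpow : ∀ z : ℂ, (n : ℂ) ^ z ≠ 0 := fun z h =>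
    hn0 ((Complex.cpow_eq_zero_iff _ _).mp h).1
  have hGx : GammaSeq x n ≠ 0 := fun h => by
    rw [h, zero_mul] at ex; exact mul_ne_zero (hcpow x) hfac ex.symm
  have hGy : GammaSeq y n ≠ 0 := fun h => by
    rw [h, zero_mul] at ey; exact mul_ne_zero (hcpow y) hfac ey.symm
  show _ = _
  rw [Gamma_shift x hx0 (n + 1), Gamma_shift y hy0 (n + 1), Gamma_shift u hu0 (n + 1),
    Gamma_shift v hv0 (n + 1), ← hPxd, ← hPyd, ← hPud, ← hPvd, div_mul_div_comm,
    div_eq_div_iff (mul_ne_zero (mul_ne_zero hΓu hΓv) (mul_ne_zero hGx hGy))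
      (mul_ne_zero (mul_ne_zero hΓu hPu) (mul_ne_zero hΓv hPv))]
  have hpow : (n : ℂ) ^ x * (n : ℂ) ^ y = (n : ℂ) ^ u * (n : ℂ) ^ v := by
    rw [← Complex.cpow_add _ _ hn0, ← Complex.cpow_add _ _ hn0, hsum]
  calc Gamma x * Gamma y * (GammaSeq u n * GammaSeq v n) * (Gamma u * Pu * (Gamma v * Pv))
      = Gamma x * Gamma y * Gamma u * Gamma v * ((GammaSeq u n * Pu) * (GammaSeq v n * Pv)) := by
        ring
    _ = Gamma x * Gamma y * Gamma u * Gamma v *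
        (((n : ℂ) ^ u * (n : ℂ) ^ v) * (n.factorial * n.factorial)) := by
        rw [eu, ev]; ring
    _ = Gamma x * Gamma y * Gamma u * Gamma v *
        (((n : ℂ) ^ x * (n : ℂ) ^ y) * (n.factorial * n.factorial)) := by rw [hpow]
    _ = Gamma x * Gamma y * Gamma u * Gamma v * ((GammaSeq x n * Px) * (GammaSeq y n * Py)) := by
        rw [ex, ey]; ring
    _ = Gamma x * Px * (Gamma y * Py) * (Gamma u * Gamma v * (GammaSeq x n * GammaSeq y n)) := by
        ring

/-- Pointwise limit of the Bailey WZ summand: for each fixed `k`,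
`F(n,k) → δ_{k,0}` as `n → ∞`. -/
theorem bailey_WZ_summand_limit (a b : ℂ)
    (h1 : ∀ n m : ℕ, b + 2 * (n : ℂ) ≠ -(m : ℂ))
    (h2 : ∀ n : ℕ, Gamma ((a + b) / 2 + (n : ℂ)) ≠ 0)
    (h3 : ∀ n : ℕ, Gamma ((1 - a + b) / 2 + (n : ℂ)) ≠ 0)
    (h4 : ∀ n : ℕ, Gamma (b / 2 + (n : ℂ)) ≠ 0)
    (h5 : ∀ n : ℕ, Gamma ((1 + b) / 2 + (n : ℂ)) ≠ 0) :
    ∀ k : ℕ,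
      Tendsto (fun n : ℕ => baileyF a b n k) atTop
        (𝓝 (if k = 0 then 1 else 0)) := by
  intro k
  have hR : Tendsto (fun n : ℕ => Gamma ((a + b) / 2 + n) * Gamma ((1 - a + b) / 2 + n) /
      (Gamma (b / 2 + n) * Gamma ((1 + b) / 2 + n))) atTop (𝓝 1) :=
    gamma_ratio_tendsto _ _ _ _ (by ring) h2 h3 h4 h5
  rcases eq_or_ne k 0 with rfl | hk
  · rw [if_pos rfl]
    refine hR.congr fun n => ?_
    simp [baileyF, poch]
  · rw [if_neg hk]
    have hterm : ∀ j : ℕ, Tendsto (fun n : ℕ => (b + 2 * (n : ℂ) + j)⁻¹) atTop (𝓝 0) := by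
      intro j
      rw [tendsto_zero_iff_norm_tendsto_zero]
      have h1' : Tendsto (fun n : ℕ => 2 * (n : ℝ) - ‖b + (j : ℂ)‖) atTop atTop :=
        tendsto_atTop_add_const_right _ _
          (tendsto_natCast_atTop_atTop.const_mul_atTop (by norm_num : (0:ℝ) < 2))
      have hb : ∀ n : ℕ, 2 * (n : ℝ) - ‖b + (j : ℂ)‖ ≤ ‖b + 2 * (n : ℂ) + j‖ := by
        intro n
        have h := norm_sub_norm_le (2 * (n : ℂ)) (-(b + j))
        have e1 : 2 * (n : ℂ) - -(b + (j : ℂ)) = b + 2 * n + j := by ring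
        have e2 : ‖2 * (n : ℂ)‖ = 2 * (n : ℝ) := by
          simp
        rw [e1, norm_neg, e2] at h
        exact h
      have hnorm : Tendsto (fun n : ℕ => ‖b + 2 * (n : ℂ) + j‖) atTop atTop :=
        tendsto_atTop_mono hb h1'
      simpa [norm_inv, Pi.inv_def] using hnorm.inv_tendsto_atTop
    have hinv : Tendsto (fun n : ℕ => (poch (b + 2 * (n : ℕ)) k)⁻¹) atTop (𝓝 0) := by
      have heq : ∀ n : ℕ, (poch (b + 2 * (n : ℕ)) k)⁻¹
          = ∏ j ∈ Finset.range k, (b + 2 * (n : ℂ) + j)⁻¹ := fun n => by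
        rw [poch_eq_prod, ← Finset.prod_inv_distrib]
      have hprod : Tendsto (fun n : ℕ => ∏ j ∈ Finset.range k, (b + 2 * (n : ℂ) + j)⁻¹)
          atTop (𝓝 (∏ _j ∈ Finset.range k, (0 : ℂ))) :=
        tendsto_finset_prod _ fun j _ => hterm j
      simp only [Finset.prod_const, Finset.card_range, zero_pow hk] at hprod
      exact hprod.congr fun n => (heq n).symm
    have hfinal : Tendsto (fun n : ℕ =>
        (poch a k * poch (1 - a) k * (1 / 2 : ℂ) ^ k / (Nat.factorial k : ℂ)) *
          (poch (b + 2 * (n : ℕ)) k)⁻¹ *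
        (Gamma ((a + b) / 2 + n) * Gamma ((1 - a + b) / 2 + n) /
          (Gamma (b / 2 + n) * Gamma ((1 + b) / 2 + n)))) atTop (𝓝 0) := by
      have := ((tendsto_const_nhds (x := poch a k * poch (1 - a) k * (1 / 2 : ℂ) ^ k / (Nat.factorial k : ℂ))).mul hinv).mul hR
      simpa using this
    refine hfinal.congr fun n => ?_
    simp only [baileyF, div_eq_mul_inv, mul_inv]
    ring
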